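/- For every real α with |α| ≥ 5, there is no continuously differentiable function g : [0, π] → ℝ satisfying g'(θ) > g(θ)² - g(θ)·cot(θ) - 1 + 4α·cos²(θ) + 4α²·sin²(θ)·cos²(θ) for all θ ∈ (0, π). -/

import Mathlib

open Real Set

/-- Antiderivative of the comparison function. -/
noncomputable def quadG (α : ℝ) : ℝ → ℝ := fun θ =>
  (α ^ 2 / 4 + α / 2 - 5 / 8) * θ +
    Real.sin θ * Real.cos θ *
      ((3 / 8 + α / 2 + α ^ 2 / 4) + (-α - 7 * α ^ 2 / 6) * Real.cos θ ^ 2 +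
        (2 * α ^ 2 / 3) * Real.cos θ ^ 4)

lemma quadG_hasDerivAt (α θ : ℝ) :
    HasDerivAt (quadG α)
      (-Real.sin θ ^ 2 - Real.cos θ ^ 2 / 4 + 4 * α * Real.sin θ ^ 2 * Real.cos θ ^ 2
        + 4 * α ^ 2 * Real.sin θ ^ 4 * Real.cos θ ^ 2) θ := by
  have hs := Real.hasDerivAt_sin θ
  have hc := Real.hasDerivAt_cos θ
  have h : HasDerivAt (quadG α)
      ((α ^ 2 / 4 + α / 2 - 5 / 8) * 1 +
        ((Real.cos θ * Real.cos θ + Real.sin θ * (-Real.sin θ)) *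
          ((3 / 8 + α / 2 + α ^ 2 / 4) + (-α - 7 * α ^ 2 / 6) * Real.cos θ ^ 2 +
            (2 * α ^ 2 / 3) * Real.cos θ ^ 4) +
          (Real.sin θ * Real.cos θ) *
            ((-α - 7 * α ^ 2 / 6) * (2 * Real.cos θ ^ 1 * (-Real.sin θ)) +
              (2 * α ^ 2 / 3) * (4 * Real.cos θ ^ 3 * (-Real.sin θ))))) θ := by
    exact ((hasDerivAt_id θ).const_mul _).add
      ((hs.mul hc).mul ((((hc.pow 2).const_mul _).const_add _).add ((hc.pow 4).const_mul _)))
  convert h using 1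
  linear_combination
    (-5/8 + α/2 + α^2/4 + α * Real.cos θ ^ 2 + α^2 * Real.cos θ ^ 2 / 2
      - 2/3 * α^2 * Real.cos θ ^ 4 + 4 * α^2 * Real.sin θ ^ 2 * Real.cos θ ^ 2) *
      (Real.sin_sq_add_cos_sq θ)

theorem no_foliation_large_quadrupole (α : ℝ) (hα : |α| ≥ 5) :
    ¬ ∃ g g' : ℝ → ℝ,
      (∀ θ ∈ Set.Icc (0 : ℝ) π, HasDerivWithinAt g (g' θ) (Set.Icc 0 π) θ) ∧
      ContinuousOn g' (Set.Icc 0 π) ∧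
      (∀ θ ∈ Set.Ioo (0 : ℝ) π,
        g' θ > (g θ) ^ 2 - g θ * (cos θ / sin θ) - 1
          + 4 * α * (cos θ) ^ 2 + 4 * α ^ 2 * (sin θ) ^ 2 * (cos θ) ^ 2) := by
  rintro ⟨g, g', hderiv, hg'c, hineq⟩
  have hπ : (0 : ℝ) < π := Real.pi_pos
  have hgc : ContinuousOn g (Icc 0 π) := fun x hx => (hderiv x hx).continuousWithinAt
  -- the function v = g * sin^2 and its derivative
  set f : ℝ → ℝ := fun θ =>
    -sin θ ^ 2 - cos θ ^ 2 / 4 + 4 * α * sin θ ^ 2 * cos θ ^ 2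
      + 4 * α ^ 2 * sin θ ^ 4 * cos θ ^ 2 with hf
  set w : ℝ → ℝ := fun θ => g' θ * sin θ ^ 2 + g θ * (2 * sin θ * cos θ) with hw
  have hv : ∀ θ ∈ Icc (0 : ℝ) π,
      HasDerivWithinAt (fun θ => g θ * sin θ ^ 2) (w θ) (Icc 0 π) θ := by
    intro θ hθ
    have h1 : HasDerivWithinAt (fun θ : ℝ => sin θ ^ 2)
        (2 * sin θ ^ 1 * cos θ) (Icc 0 π) θ :=
      ((Real.hasDerivAt_sin θ).pow 2).hasDerivWithinAt
    have : HasDerivWithinAt (fun θ => g θ * sin θ ^ 2)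
        (g' θ * sin θ ^ 2 + g θ * (2 * sin θ ^ 1 * cos θ)) (Icc 0 π) θ :=
      (hderiv θ hθ).mul h1
    convert this using 1
    simp only [hw, pow_one]
  have hwc : ContinuousOn w (Icc 0 π) := by
    apply ContinuousOn.add
    · exact hg'c.mul (Real.continuous_sin.pow 2).continuousOn
    · exact hgc.mul (by fun_prop)
  -- integral of w is zero by FTC
  have hint : ∫ θ in (0:ℝ)..π, w θ = 0 := by
    rw [intervalIntegral.integral_eq_sub_of_hasDeriv_right_of_le hπ.le
      (fun x hx => (hv x hx).continuousWithinAt)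
      (fun x hx => ((hv x (mem_Icc_of_Ioo hx)).hasDerivAt
        (Icc_mem_nhds hx.1 hx.2)).hasDerivWithinAt)
      (hwc.intervalIntegrable_of_Icc hπ.le)]
    simp [Real.sin_pi]
  -- integral of f by FTC
  have hintf : ∫ θ in (0:ℝ)..π, f θ = (α ^ 2 / 4 + α / 2 - 5 / 8) * π := by
    rw [intervalIntegral.integral_eq_sub_of_hasDerivAt
      (fun x _ => quadG_hasDerivAt α x)
      ((by fun_prop : ContinuousOn f (Icc 0 π)).intervalIntegrable_of_Icc hπ.le)]
    simp [quadG, Real.sin_pi]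
  -- pointwise comparison f ≤ w on the interior
  have hle : ∀ θ ∈ Ioo (0:ℝ) π, f θ < w θ := by
    intro θ hθ
    simp only [hf, hw]
    have hs : 0 < sin θ := Real.sin_pos_of_pos_of_lt_pi hθ.1 hθ.2
    have key := hineq θ hθ
    have hdiv : g θ * (cos θ / sin θ) * sin θ ^ 2 = g θ * cos θ * sin θ := by
      field_simp
    have h2 : (g θ ^ 2 - g θ * (cos θ / sin θ) - 1
        + 4 * α * cos θ ^ 2 + 4 * α ^ 2 * sin θ ^ 2 * cos θ ^ 2) * sin θ ^ 2
        < g' θ * sin θ ^ 2 :=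
      mul_lt_mul_of_pos_right key (by positivity)
    nlinarith [sq_nonneg (g θ * sin θ + cos θ / 2), hdiv, h2]
  have hleIoc : ∀ θ ∈ Ioc (0:ℝ) π, f θ ≤ w θ := by
    intro θ hθ
    rcases eq_or_lt_of_le hθ.2 with h | h
    · subst h
      simp [hf, hw, Real.sin_pi, Real.cos_pi]
    · exact (hle θ ⟨hθ.1, h⟩).le
  have hlt : ∃ c ∈ Icc (0:ℝ) π, f c < w c :=
    ⟨π / 2, ⟨by positivity, by linarith⟩,
      hle (π / 2) ⟨by positivity, by linarith⟩⟩
  have hmain : (∫ θ in (0:ℝ)..π, f θ) < ∫ θ in (0:ℝ)..π, w θ :=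
    intervalIntegral.integral_lt_integral_of_continuousOn_of_le_of_exists_lt hπ
      (by fun_prop) hwc hleIoc hlt
  rw [hint, hintf] at hmain
  have ha : (0:ℝ) ≤ α ^ 2 / 4 + α / 2 - 5 / 8 := by
    nlinarith [sq_abs α, neg_abs_le α, abs_nonneg α]
  nlinarith [mul_nonneg ha hπ.le]
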